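/- Simulation of indistinguishable pairs by randomized response (Kairouz–Oh–Viswanath): let ε, δ ≥ 0 and let p₀ and p₁ be PMFs on a countable type Y that are (ε,δ)-indistinguishable. Then there exists a map T assigning to each element of {0,⊤,⊥,1} a PMF on Y such that for each b ∈ {0,1}, the PMF obtained by sampling z ∼ RR_{ε,δ}(b) and then sampling from T(z) (i.e., the monadic bind of RR_{ε,δ}(b) along T) equals p_b. -/

import Mathlib

open scoped ENNReal

/-- Two PMFs are `(ε,δ)`-indistinguishable if each assigns to every set at most
`e^ε` times the mass the other assigns, plus `δ`. -/
def Indist {Y : Type*} (p q : PMF Y) (ε δ : ℝ) : Prop :=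
  ∀ S : Set Y,
    p.toOuterMeasure S ≤ ENNReal.ofReal (Real.exp ε) * q.toOuterMeasure S + ENNReal.ofReal δ ∧
    q.toOuterMeasure S ≤ ENNReal.ofReal (Real.exp ε) * p.toOuterMeasure S + ENNReal.ofReal δ

/-- The four-element output type `{0, ⊤, ⊥, 1}` of randomized response. -/
inductive RROut : Type
  | zero : RROut
  | top : RROut
  | bot : RROut
  | one : RROut

/-- A PMF `r` on `{0,⊤,⊥,1}` is the randomized response distribution `RR_{ε,δ}(0)`
if it has the prescribed four masses. -/
def IsRR0 (ε δ : ℝ) (r : PMF RROut) : Prop :=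
  r RROut.zero = ENNReal.ofReal δ ∧
  r RROut.top = ENNReal.ofReal ((1 - δ) * (Real.exp ε / (1 + Real.exp ε))) ∧
  r RROut.bot = ENNReal.ofReal ((1 - δ) * (1 / (1 + Real.exp ε))) ∧
  r RROut.one = 0

/-- A PMF `r` on `{0,⊤,⊥,1}` is the randomized response distribution `RR_{ε,δ}(1)`
if it has the prescribed four masses. -/
def IsRR1 (ε δ : ℝ) (r : PMF RROut) : Prop :=
  r RROut.zero = 0 ∧
  r RROut.top = ENNReal.ofReal ((1 - δ) * (1 / (1 + Real.exp ε))) ∧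
  r RROut.bot = ENNReal.ofReal ((1 - δ) * (Real.exp ε / (1 + Real.exp ε))) ∧
  r RROut.one = ENNReal.ofReal δ

deriving instance DecidableEq for RROut

instance : Fintype RROut :=
  ⟨{RROut.zero, RROut.top, RROut.bot, RROut.one}, by intro x; cases x <;> decide⟩

lemma tsum_RROut (F : RROut → ℝ≥0∞) :
    ∑' z, F z = F .zero + F .top + F .bot + F .one := by
  rw [tsum_fintype]
  show ∑ z ∈ ({RROut.zero, RROut.top, RROut.bot, RROut.one} : Finset RROut), F z = _
  rw [Finset.sum_insert (by decide), Finset.sum_insert (by decide),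
    Finset.sum_insert (by decide), Finset.sum_singleton]
  ring

/-- Build a PMF from a real density. -/
noncomputable def mkPMF {Y : Type*} (t : Y → ℝ) (h1 : ∀ y, 0 ≤ t y) (h2 : Summable t)
    (h3 : ∑' y, t y = 1) : PMF Y :=
  ⟨fun y => ENNReal.ofReal (t y), by
    rw [Summable.hasSum_iff ENNReal.summable, ← ENNReal.ofReal_tsum_of_nonneg h1 h2, h3,
      ENNReal.ofReal_one]⟩

@[simp] lemma mkPMF_apply {Y : Type*} (t : Y → ℝ) (h1 h2 h3) (y : Y) :
    mkPMF t h1 h2 h3 y = ENNReal.ofReal (t y) := rfl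

lemma toOM_le_one {Y : Type*} (p : PMF Y) (A : Set Y) : p.toOuterMeasure A ≤ 1 := by
  rw [PMF.toOuterMeasure_apply, ← PMF.tsum_coe p]
  exact ENNReal.tsum_le_tsum (fun y => Set.indicator_le_self A (⇑p) y)

lemma toOM_toReal {Y : Type*} (p : PMF Y) (A : Set Y) :
    (p.toOuterMeasure A).toReal = ∑' y, A.indicator (fun y => (p y).toReal) y := by
  rw [PMF.toOuterMeasure_apply, ENNReal.tsum_toReal_eq
    (fun y => ne_top_of_le_ne_top (PMF.apply_ne_top p y) (Set.indicator_le_self A (⇑p) y))]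
  apply tsum_congr
  intro y
  by_cases hy : y ∈ A
  · rw [Set.indicator_of_mem hy, Set.indicator_of_mem hy]
  · rw [Set.indicator_of_notMem hy, Set.indicator_of_notMem hy]; rfl

/-- Mass bound: from one direction of indistinguishability, the total excess of `p0`
over `K · p1` is at most `δ`. -/
lemma mass_bound {Y : Type*} (p0 p1 : PMF Y) (K δ : ℝ) (hK : 0 < K) (hδ0 : 0 ≤ δ)
    (hp : ∀ S : Set Y,
      p0.toOuterMeasure S ≤ ENNReal.ofReal K * p1.toOuterMeasure S + ENNReal.ofReal δ) :
    ∑' y, ((p0 y).toReal - min ((p0 y).toReal) (K * (p1 y).toReal)) ≤ δ := by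
  classical
  have hsum0 : Summable (fun y => (p0 y).toReal) :=
    ENNReal.summable_toReal (by rw [PMF.tsum_coe]; exact ENNReal.one_ne_top)
  have hsum1 : Summable (fun y => (p1 y).toReal) :=
    ENNReal.summable_toReal (by rw [PMF.tsum_coe]; exact ENNReal.one_ne_top)
  set A : Set Y := {y | K * (p1 y).toReal < (p0 y).toReal} with hA
  have hφ0n : ∀ y, 0 ≤ A.indicator (fun y => (p0 y).toReal) y :=
    fun y => Set.indicator_nonneg (fun y _ => ENNReal.toReal_nonneg) y
  have hφ1n : ∀ y, 0 ≤ A.indicator (fun y => (p1 y).toReal) y :=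
    fun y => Set.indicator_nonneg (fun y _ => ENNReal.toReal_nonneg) y
  have hφ0s : Summable (A.indicator (fun y => (p0 y).toReal)) :=
    Summable.of_nonneg_of_le hφ0n
      (fun y => Set.indicator_le_self' (fun x _ => ENNReal.toReal_nonneg) y) hsum0
  have hφ1s : Summable (A.indicator (fun y => (p1 y).toReal)) :=
    Summable.of_nonneg_of_le hφ1n
      (fun y => Set.indicator_le_self' (fun x _ => ENNReal.toReal_nonneg) y) hsum1
  have hpt : ∀ y, (p0 y).toReal - min ((p0 y).toReal) (K * (p1 y).toReal) =
      A.indicator (fun y => (p0 y).toReal) y - K * A.indicator (fun y => (p1 y).toReal) y := by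
    intro y
    by_cases hy : y ∈ A
    · have h1 : K * (p1 y).toReal < (p0 y).toReal := hy
      rw [Set.indicator_of_mem hy, Set.indicator_of_mem hy, min_eq_right h1.le]
    · have h2 : (p0 y).toReal ≤ K * (p1 y).toReal := le_of_not_gt hy
      rw [Set.indicator_of_notMem hy, Set.indicator_of_notMem hy, min_eq_left h2]
      ring
  have hfin0 : p0.toOuterMeasure A ≠ ⊤ := ne_top_of_le_ne_top ENNReal.one_ne_top (toOM_le_one p0 A)
  have hfin1 : p1.toOuterMeasure A ≠ ⊤ := ne_top_of_le_ne_top ENNReal.one_ne_top (toOM_le_one p1 A)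
  have hRfin : ENNReal.ofReal K * p1.toOuterMeasure A + ENNReal.ofReal δ ≠ ⊤ :=
    ENNReal.add_ne_top.2 ⟨ENNReal.mul_ne_top ENNReal.ofReal_ne_top hfin1, ENNReal.ofReal_ne_top⟩
  have hreal : (p0.toOuterMeasure A).toReal ≤ K * (p1.toOuterMeasure A).toReal + δ := by
    have := (ENNReal.toReal_le_toReal hfin0 hRfin).2 (hp A)
    rwa [ENNReal.toReal_add (ENNReal.mul_ne_top ENNReal.ofReal_ne_top hfin1)
      ENNReal.ofReal_ne_top, ENNReal.toReal_mul, ENNReal.toReal_ofReal hK.le,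
      ENNReal.toReal_ofReal hδ0] at this
  rw [toOM_toReal, toOM_toReal] at hreal
  calc ∑' y, ((p0 y).toReal - min ((p0 y).toReal) (K * (p1 y).toReal))
      = ∑' y, (A.indicator (fun y => (p0 y).toReal) y
          - K * A.indicator (fun y => (p1 y).toReal) y) := tsum_congr hpt
    _ = (∑' y, A.indicator (fun y => (p0 y).toReal) y)
          - K * ∑' y, A.indicator (fun y => (p1 y).toReal) y := by
        rw [Summable.tsum_sub hφ0s (hφ1s.mul_left K), tsum_mul_left]
    _ ≤ δ := by linarith

/-- Decomposition lemma (asymmetric version, assuming `∑ v ≤ ∑ u`). -/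
lemma decomp_aux {Y : Type*} (K δ : ℝ) (hK : 1 ≤ K) (hδ0 : 0 ≤ δ) (hδ1 : δ < 1)
    (P0 P1 : Y → ℝ) (hP0n : ∀ y, 0 ≤ P0 y) (hP1n : ∀ y, 0 ≤ P1 y)
    (hs0 : Summable P0) (hs1 : Summable P1)
    (ht0 : ∑' y, P0 y = 1) (ht1 : ∑' y, P1 y = 1)
    (hm0 : ∑' y, (P0 y - min (P0 y) (K * P1 y)) ≤ δ)
    (hm1 : ∑' y, (P1 y - min (P1 y) (K * P0 y)) ≤ δ)
    (hwlog : ∑' y, min (P1 y) (K * P0 y) ≤ ∑' y, min (P0 y) (K * P1 y)) :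
    ∃ H0 H1 : Y → ℝ, (∀ y, 0 ≤ H0 y) ∧ (∀ y, 0 ≤ H1 y) ∧ (∀ y, H0 y ≤ P0 y) ∧
      (∀ y, H1 y ≤ P1 y) ∧ (∀ y, H0 y ≤ K * H1 y) ∧ (∀ y, H1 y ≤ K * H0 y) ∧
      Summable H0 ∧ Summable H1 ∧ (∑' y, H0 y = 1 - δ) ∧ (∑' y, H1 y = 1 - δ) := by
  have hKpos : 0 < K := lt_of_lt_of_le one_pos hK
  set u : Y → ℝ := fun y => min (P0 y) (K * P1 y) with hu
  set v : Y → ℝ := fun y => min (P1 y) (K * P0 y) with hv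
  have hun : ∀ y, 0 ≤ u y := fun y => le_min (hP0n y) (mul_nonneg hKpos.le (hP1n y))
  have hvn : ∀ y, 0 ≤ v y := fun y => le_min (hP1n y) (mul_nonneg hKpos.le (hP0n y))
  have huP : ∀ y, u y ≤ P0 y := fun y => min_le_left _ _
  have hvP : ∀ y, v y ≤ P1 y := fun y => min_le_left _ _
  have hus : Summable u := Summable.of_nonneg_of_le hun huP hs0
  have hvs : Summable v := Summable.of_nonneg_of_le hvn hvP hs1
  have hm0' : ∑' y, (P0 y - u y) ≤ δ := hm0
  have hm1' : ∑' y, (P1 y - v y) ≤ δ := hm1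
  have huKv : ∀ y, u y ≤ K * v y := by
    intro y
    rw [hv, mul_min_of_nonneg _ _ hKpos.le]
    refine le_min ((min_le_right _ _).trans (le_refl _)) ((min_le_left _ _).trans ?_)
    nlinarith [mul_nonneg (sub_nonneg.2 hK) (hP0n y),
      mul_nonneg (mul_nonneg (sub_nonneg.2 hK) hKpos.le) (hP0n y)]
  have hvKu : ∀ y, v y ≤ K * u y := by
    intro y
    rw [hu, mul_min_of_nonneg _ _ hKpos.le]
    refine le_min ((min_le_right _ _).trans (le_refl _)) ((min_le_left _ _).trans ?_)
    nlinarith [mul_nonneg (sub_nonneg.2 hK) (hP1n y),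
      mul_nonneg (mul_nonneg (sub_nonneg.2 hK) hKpos.le) (hP1n y)]
  set Nu : ℝ := ∑' y, u y with hNu
  set Nv : ℝ := ∑' y, v y with hNv
  have hNu_ge : 1 - δ ≤ Nu := by
    have h1 : ∑' y, (P0 y - u y) = 1 - Nu := by rw [Summable.tsum_sub hs0 hus, ht0]
    linarith
  have hNv_ge : 1 - δ ≤ Nv := by
    have h1 : ∑' y, (P1 y - v y) = 1 - Nv := by rw [Summable.tsum_sub hs1 hvs, ht1]
    linarith
  have hc : (0:ℝ) < 1 - δ := by linarith
  have hNv_pos : 0 < Nv := lt_of_lt_of_le hc hNv_ge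
  set ρ : ℝ := (1 - δ) / Nv with hρ
  have hρ_pos : 0 < ρ := div_pos hc hNv_pos
  have hρ_le : ρ ≤ 1 := (div_le_one hNv_pos).2 hNv_ge
  set H1 : Y → ℝ := fun y => ρ * v y with hH1
  have hH1n : ∀ y, 0 ≤ H1 y := fun y => mul_nonneg hρ_pos.le (hvn y)
  have hH1s : Summable H1 := hvs.mul_left ρ
  have hH1sum : ∑' y, H1 y = 1 - δ := by
    rw [hH1]
    show ∑' y, ρ * v y = 1 - δ
    rw [tsum_mul_left, ← hNv, hρ, div_mul_cancel₀]
    exact hNv_pos.ne'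
  have hH1v : ∀ y, H1 y ≤ v y := fun y => by
    calc H1 y = ρ * v y := rfl
      _ ≤ 1 * v y := mul_le_mul_of_nonneg_right hρ_le (hvn y)
      _ = v y := one_mul _
  have hH1P : ∀ y, H1 y ≤ P1 y := fun y => (hH1v y).trans (hvP y)
  set L : Y → ℝ := fun y => H1 y / K with hL
  set U : Y → ℝ := fun y => min (P0 y) (K * H1 y) with hU
  have hLn : ∀ y, 0 ≤ L y := fun y => by
    show 0 ≤ H1 y / K
    exact div_nonneg (hH1n y) hKpos.le
  have hLU : ∀ y, L y ≤ U y := by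
    intro y
    show H1 y / K ≤ min (P0 y) (K * H1 y)
    apply le_min
    · rw [div_le_iff₀ hKpos]
      calc H1 y ≤ v y := hH1v y
        _ ≤ K * P0 y := min_le_right _ _
        _ = P0 y * K := by ring
    · rw [div_le_iff₀ hKpos]
      nlinarith [mul_nonneg (sub_nonneg.2 hK) (hH1n y),
        mul_nonneg (mul_nonneg (sub_nonneg.2 hK) hKpos.le) (hH1n y)]
  have hLeq : L = fun y => K⁻¹ * H1 y := by funext y; show H1 y / K = K⁻¹ * H1 y; field_simp
  have hLs : Summable L := by rw [hLeq]; exact hH1s.mul_left _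
  have hUn : ∀ y, 0 ≤ U y := fun y => le_min (hP0n y) (mul_nonneg hKpos.le (hH1n y))
  have hUs : Summable U := Summable.of_nonneg_of_le hUn (fun y => min_le_left _ _) hs0
  have hLsum : ∑' y, L y = (1 - δ) / K := by
    rw [hLeq, tsum_mul_left, hH1sum]; field_simp
  have hLsum_le : ∑' y, L y ≤ 1 - δ := by
    rw [hLsum, div_le_iff₀ hKpos]
    nlinarith
  have hUsum_ge : 1 - δ ≤ ∑' y, U y := by
    have hpt : ∀ y, ρ * u y ≤ U y := by
      intro y
      apply le_min
      · calc ρ * u y ≤ 1 * u y := mul_le_mul_of_nonneg_right hρ_le (hun y)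
          _ = u y := one_mul _
          _ ≤ P0 y := huP y
      · calc ρ * u y ≤ ρ * (K * v y) := mul_le_mul_of_nonneg_left (huKv y) hρ_pos.le
          _ = K * (ρ * v y) := by ring
          _ = K * H1 y := rfl
    calc (1:ℝ) - δ = ρ * Nv := by rw [hρ]; field_simp
      _ ≤ ρ * Nu := mul_le_mul_of_nonneg_left hwlog hρ_pos.le
      _ = ∑' y, ρ * u y := by rw [tsum_mul_left]
      _ ≤ ∑' y, U y := Summable.tsum_le_tsum hpt (hus.mul_left ρ) hUs
  set SL : ℝ := ∑' y, L y with hSL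
  set SU : ℝ := ∑' y, U y with hSU
  have hden_nonneg : (0:ℝ) ≤ SU - SL := by linarith
  set θ : ℝ := if SU - SL = 0 then 0 else (1 - δ - SL) / (SU - SL) with hθ
  have hθ_nonneg : 0 ≤ θ := by
    rw [hθ]; split
    · exact le_refl _
    · exact div_nonneg (by linarith) hden_nonneg
  have hθ_le : θ ≤ 1 := by
    rw [hθ]; split
    · exact zero_le_one
    · next h =>
      rw [div_le_one (lt_of_le_of_ne hden_nonneg (Ne.symm h))]
      linarith
  set H0 : Y → ℝ := fun y => L y + θ * (U y - L y) with hH0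
  have hUL_s : Summable (fun y => U y - L y) := hUs.sub hLs
  have hH0s : Summable H0 := hLs.add (hUL_s.mul_left θ)
  have hH0sum : ∑' y, H0 y = 1 - δ := by
    rw [hH0]
    show ∑' y, (L y + θ * (U y - L y)) = 1 - δ
    rw [Summable.tsum_add hLs (hUL_s.mul_left θ), tsum_mul_left, Summable.tsum_sub hUs hLs, ← hSL, ← hSU]
    by_cases h : SU - SL = 0
    · have h2 : SL = 1 - δ := le_antisymm hLsum_le (by linarith)
      rw [hθ, if_pos h]
      linarith
    · rw [hθ, if_neg h, div_mul_cancel₀ _ h]; ring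
  have hLH0 : ∀ y, L y ≤ H0 y := by
    intro y
    show L y ≤ L y + θ * (U y - L y)
    nlinarith [hLU y]
  have hH0U : ∀ y, H0 y ≤ U y := by
    intro y
    show L y + θ * (U y - L y) ≤ U y
    nlinarith [hLU y]
  refine ⟨H0, H1, ?_, hH1n, ?_, hH1P, ?_, ?_, hH0s, hH1s, hH0sum, hH1sum⟩
  · exact fun y => le_trans (hLn y) (hLH0 y)
  · exact fun y => le_trans (hH0U y) (min_le_left _ _)
  · exact fun y => le_trans (hH0U y) (min_le_right _ _)
  · intro y
    have h1 := hLH0 y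
    have h2 : H1 y / K ≤ H0 y := h1
    rw [div_le_iff₀ hKpos] at h2
    linarith

/-- Decomposition lemma, symmetric version. -/
lemma decomp {Y : Type*} (K δ : ℝ) (hK : 1 ≤ K) (hδ0 : 0 ≤ δ) (hδ1 : δ < 1)
    (P0 P1 : Y → ℝ) (hP0n : ∀ y, 0 ≤ P0 y) (hP1n : ∀ y, 0 ≤ P1 y)
    (hs0 : Summable P0) (hs1 : Summable P1)
    (ht0 : ∑' y, P0 y = 1) (ht1 : ∑' y, P1 y = 1)
    (hm0 : ∑' y, (P0 y - min (P0 y) (K * P1 y)) ≤ δ)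
    (hm1 : ∑' y, (P1 y - min (P1 y) (K * P0 y)) ≤ δ) :
    ∃ H0 H1 : Y → ℝ, (∀ y, 0 ≤ H0 y) ∧ (∀ y, 0 ≤ H1 y) ∧ (∀ y, H0 y ≤ P0 y) ∧
      (∀ y, H1 y ≤ P1 y) ∧ (∀ y, H0 y ≤ K * H1 y) ∧ (∀ y, H1 y ≤ K * H0 y) ∧
      Summable H0 ∧ Summable H1 ∧ (∑' y, H0 y = 1 - δ) ∧ (∑' y, H1 y = 1 - δ) := by
  rcases le_total (∑' y, min (P1 y) (K * P0 y)) (∑' y, min (P0 y) (K * P1 y)) with h | h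
  · exact decomp_aux K δ hK hδ0 hδ1 P0 P1 hP0n hP1n hs0 hs1 ht0 ht1 hm0 hm1 h
  · obtain ⟨H1, H0, a1, a0, b1, b0, c1, c0, d1, d0, e1, e0⟩ :=
      decomp_aux K δ hK hδ0 hδ1 P1 P0 hP1n hP0n hs1 hs0 ht1 ht0 hm1 hm0 h
    exact ⟨H0, H1, a0, a1, b0, b1, c0, c1, d0, d1, e0, e1⟩


/-- Existence of the top/bottom densities from a pointwise `K`-indistinguishable pair. -/
lemma fg_exists {Y : Type*} (K δ : ℝ) (hK : 1 ≤ K) (hc : (0:ℝ) < 1 - δ)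
    (H0 H1 : Y → ℝ) (hH0n : ∀ y, 0 ≤ H0 y) (hH1n : ∀ y, 0 ≤ H1 y)
    (hH01 : ∀ y, H0 y ≤ K * H1 y) (hH10 : ∀ y, H1 y ≤ K * H0 y)
    (hH0s : Summable H0) (hH1s : Summable H1)
    (hH0sum : ∑' y, H0 y = 1 - δ) (hH1sum : ∑' y, H1 y = 1 - δ) :
    ∃ f g : Y → ℝ, (∀ y, 0 ≤ f y) ∧ Summable f ∧ (∑' y, f y = 1) ∧
      (∀ y, 0 ≤ g y) ∧ Summable g ∧ (∑' y, g y = 1) ∧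
      (∀ y, (1 - δ) * (K / (1 + K)) * f y + (1 - δ) * (1 / (1 + K)) * g y = H0 y) ∧
      (∀ y, (1 - δ) * (1 / (1 + K)) * f y + (1 - δ) * (K / (1 + K)) * g y = H1 y) := by
  have hK1 : (0:ℝ) < 1 + K := by linarith
  rcases eq_or_lt_of_le hK with hKe | hKlt
  · -- K = 1
    have heq : ∀ y, H0 y = H1 y := by
      intro y
      have h1 := hH01 y
      have h2 := hH10 y
      rw [← hKe] at h1 h2
      linarith
    refine ⟨fun y => H0 y / (1 - δ), fun y => H0 y / (1 - δ),
      fun y => div_nonneg (hH0n y) hc.le, hH0s.div_const _, ?_,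
      fun y => div_nonneg (hH0n y) hc.le, hH0s.div_const _, ?_, ?_, ?_⟩
    · rw [tsum_div_const, hH0sum, div_self hc.ne']
    · rw [tsum_div_const, hH0sum, div_self hc.ne']
    · intro y
      rw [← hKe]
      field_simp
    · intro y
      rw [← heq y, ← hKe]
      field_simp
  · -- K > 1
    have hKm : (0:ℝ) < K - 1 := by linarith
    set c : ℝ := (K - 1) * (1 - δ) with hcdef
    have hcpos : 0 < c := mul_pos hKm hc
    refine ⟨fun y => (K * H0 y - H1 y) / c, fun y => (K * H1 y - H0 y) / c,
      fun y => div_nonneg (by linarith [hH10 y]) hcpos.le,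
      ((hH0s.mul_left K).sub hH1s).div_const _, ?_,
      fun y => div_nonneg (by linarith [hH01 y]) hcpos.le,
      ((hH1s.mul_left K).sub hH0s).div_const _, ?_, ?_, ?_⟩
    · rw [tsum_div_const, Summable.tsum_sub (hH0s.mul_left K) hH1s, tsum_mul_left, hH0sum, hH1sum,
        hcdef]
      field_simp
    · rw [tsum_div_const, Summable.tsum_sub (hH1s.mul_left K) hH0s, tsum_mul_left, hH0sum, hH1sum,
        hcdef]
      field_simp
    · intro y
      rw [hcdef]
      field_simp
      ring
    · intro y
      rw [hcdef]
      field_simp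
      ring

/-- Core construction: the four real densities. -/
lemma real_core {Y : Type*} (K δ : ℝ) (hK : 1 ≤ K) (hδ0 : 0 ≤ δ) (hδ1 : δ ≤ 1)
    (P0 P1 : Y → ℝ) (hP0n : ∀ y, 0 ≤ P0 y) (hP1n : ∀ y, 0 ≤ P1 y)
    (hs0 : Summable P0) (hs1 : Summable P1)
    (ht0 : ∑' y, P0 y = 1) (ht1 : ∑' y, P1 y = 1)
    (hm0 : ∑' y, (P0 y - min (P0 y) (K * P1 y)) ≤ δ)
    (hm1 : ∑' y, (P1 y - min (P1 y) (K * P0 y)) ≤ δ) :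
    ∃ t0 t1 f g : Y → ℝ,
      (∀ y, 0 ≤ t0 y) ∧ Summable t0 ∧ (∑' y, t0 y = 1) ∧
      (∀ y, 0 ≤ t1 y) ∧ Summable t1 ∧ (∑' y, t1 y = 1) ∧
      (∀ y, 0 ≤ f y) ∧ Summable f ∧ (∑' y, f y = 1) ∧
      (∀ y, 0 ≤ g y) ∧ Summable g ∧ (∑' y, g y = 1) ∧
      (∀ y, δ * t0 y + ((1 - δ) * (K / (1 + K))) * f y + ((1 - δ) * (1 / (1 + K))) * g y
        = P0 y) ∧
      (∀ y, δ * t1 y + ((1 - δ) * (1 / (1 + K))) * f y + ((1 - δ) * (K / (1 + K))) * g y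
        = P1 y) := by
  have hKpos : 0 < K := lt_of_lt_of_le one_pos hK
  have hK1 : (0:ℝ) < 1 + K := by linarith
  rcases eq_or_lt_of_le hδ1 with hδe | hδlt
  · -- δ = 1
    refine ⟨P0, P1, P0, P0, hP0n, hs0, ht0, hP1n, hs1, ht1, hP0n, hs0, ht0, hP0n, hs0, ht0,
      ?_, ?_⟩ <;> intro y <;> rw [hδe] <;> ring
  · -- δ < 1
    obtain ⟨H0, H1, hH0n, hH1n, hH0P, hH1P, hH01, hH10, hH0s, hH1s, hH0sum, hH1sum⟩ :=
      decomp K δ hK hδ0 hδlt P0 P1 hP0n hP1n hs0 hs1 ht0 ht1 hm0 hm1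
    have hc : (0:ℝ) < 1 - δ := by linarith
    -- t0 and t1
    by_cases hδz : δ = 0
    · -- δ = 0 : H0 = P0 and H1 = P1 pointwise; take t0 = P0, t1 = P1
      have hH0eq : ∀ y, H0 y = P0 y := by
        intro y
        have hsub : Summable (fun y => P0 y - H0 y) := hs0.sub hH0s
        have hzero : ∑' y, (P0 y - H0 y) = 0 := by
          rw [Summable.tsum_sub hs0 hH0s, ht0, hH0sum, hδz]; ring
        have hle : P0 y - H0 y ≤ 0 := by
          calc P0 y - H0 y ≤ ∑' y, (P0 y - H0 y) :=
                Summable.le_tsum hsub y (fun j _ => by linarith [hH0P j])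
            _ = 0 := hzero
        linarith [hH0P y]
      have hH1eq : ∀ y, H1 y = P1 y := by
        intro y
        have hsub : Summable (fun y => P1 y - H1 y) := hs1.sub hH1s
        have hzero : ∑' y, (P1 y - H1 y) = 0 := by
          rw [Summable.tsum_sub hs1 hH1s, ht1, hH1sum, hδz]; ring
        have hle : P1 y - H1 y ≤ 0 := by
          calc P1 y - H1 y ≤ ∑' y, (P1 y - H1 y) :=
                Summable.le_tsum hsub y (fun j _ => by linarith [hH1P j])
            _ = 0 := hzero
        linarith [hH1P y]
      obtain ⟨f, g, hfn, hfs, hfsum, hgn, hgs, hgsum, hf0, hf1⟩ :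
          ∃ f g : Y → ℝ, (∀ y, 0 ≤ f y) ∧ Summable f ∧ (∑' y, f y = 1) ∧
            (∀ y, 0 ≤ g y) ∧ Summable g ∧ (∑' y, g y = 1) ∧
            (∀ y, (1 - δ) * (K / (1 + K)) * f y + (1 - δ) * (1 / (1 + K)) * g y = H0 y) ∧
            (∀ y, (1 - δ) * (1 / (1 + K)) * f y + (1 - δ) * (K / (1 + K)) * g y = H1 y) :=
        fg_exists K δ hK hc H0 H1 hH0n hH1n hH01 hH10 hH0s hH1s hH0sum hH1sum
      refine ⟨P0, P1, f, g, hP0n, hs0, ht0, hP1n, hs1, ht1, hfn, hfs, hfsum, hgn, hgs, hgsum,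
        ?_, ?_⟩
      · intro y
        have h := hf0 y
        have h0 := hH0eq y
        rw [hδz] at h ⊢
        linarith
      · intro y
        have h := hf1 y
        have h1 := hH1eq y
        rw [hδz] at h ⊢
        linarith
    · -- δ > 0
      have hδpos : 0 < δ := lt_of_le_of_ne hδ0 (Ne.symm hδz)
      obtain ⟨f, g, hfn, hfs, hfsum, hgn, hgs, hgsum, hf0, hf1⟩ :
          ∃ f g : Y → ℝ, (∀ y, 0 ≤ f y) ∧ Summable f ∧ (∑' y, f y = 1) ∧
            (∀ y, 0 ≤ g y) ∧ Summable g ∧ (∑' y, g y = 1) ∧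
            (∀ y, (1 - δ) * (K / (1 + K)) * f y + (1 - δ) * (1 / (1 + K)) * g y = H0 y) ∧
            (∀ y, (1 - δ) * (1 / (1 + K)) * f y + (1 - δ) * (K / (1 + K)) * g y = H1 y) :=
        fg_exists K δ hK hc H0 H1 hH0n hH1n hH01 hH10 hH0s hH1s hH0sum hH1sum
      refine ⟨fun y => (P0 y - H0 y) / δ, fun y => (P1 y - H1 y) / δ, f, g,
        ?_, ?_, ?_, ?_, ?_, ?_, hfn, hfs, hfsum, hgn, hgs, hgsum, ?_, ?_⟩
      · exact fun y => div_nonneg (by linarith [hH0P y]) hδpos.le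
      · exact ((hs0.sub hH0s).div_const δ)
      · rw [tsum_div_const, Summable.tsum_sub hs0 hH0s, ht0, hH0sum]
        field_simp
        ring
      · exact fun y => div_nonneg (by linarith [hH1P y]) hδpos.le
      · exact ((hs1.sub hH1s).div_const δ)
      · rw [tsum_div_const, Summable.tsum_sub hs1 hH1s, ht1, hH1sum]
        field_simp
        ring
      · intro y
        have h := hf0 y
        have : δ * ((P0 y - H0 y) / δ) = P0 y - H0 y := by field_simp
        linarith
      · intro y
        have h := hf1 y
        have : δ * ((P1 y - H1 y) / δ) = P1 y - H1 y := by field_simp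
        linarith

/-- Kairouz–Oh–Viswanath simulation: any `(ε,δ)`-indistinguishable pair of PMFs
`p₀, p₁` arises as a common post-processing `T` of the randomized response pair
`RR_{ε,δ}(0), RR_{ε,δ}(1)`, via monadic bind. -/
theorem kov_randomized_response_simulation
    {Y : Type*} [Countable Y] (ε δ : ℝ) (hε : 0 ≤ ε) (hδ0 : 0 ≤ δ) (hδ1 : δ ≤ 1)
    (p0 p1 : PMF Y) (hind : Indist p0 p1 ε δ)
    (r0 r1 : PMF RROut) (hr0 : IsRR0 ε δ r0) (hr1 : IsRR1 ε δ r1) :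
    ∃ T : RROut → PMF Y, r0.bind T = p0 ∧ r1.bind T = p1 := by
  set K : ℝ := Real.exp ε with hKdef
  obtain ⟨hr0z, hr0t, hr0b, hr0o⟩ := hr0
  obtain ⟨hr1z, hr1t, hr1b, hr1o⟩ := hr1
  have hK : 1 ≤ K := Real.one_le_exp hε
  have hKpos : 0 < K := Real.exp_pos ε
  have hK1 : (0:ℝ) < 1 + K := by linarith
  have hs0 : Summable (fun y => (p0 y).toReal) :=
    ENNReal.summable_toReal (by rw [PMF.tsum_coe]; exact ENNReal.one_ne_top)
  have hs1 : Summable (fun y => (p1 y).toReal) :=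
    ENNReal.summable_toReal (by rw [PMF.tsum_coe]; exact ENNReal.one_ne_top)
  have ht0 : ∑' y, (p0 y).toReal = 1 := by
    rw [← ENNReal.tsum_toReal_eq (fun y => PMF.apply_ne_top p0 y), PMF.tsum_coe]
    rfl
  have ht1 : ∑' y, (p1 y).toReal = 1 := by
    rw [← ENNReal.tsum_toReal_eq (fun y => PMF.apply_ne_top p1 y), PMF.tsum_coe]
    rfl
  have hm0 := mass_bound p0 p1 K δ hKpos hδ0 (fun S => (hind S).1)
  have hm1 := mass_bound p1 p0 K δ hKpos hδ0 (fun S => (hind S).2)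
  obtain ⟨t0, t1, f, g, h0n, h0s, h0sum, h1n, h1s, h1sum, hfn, hfs, hfsum, hgn, hgs, hgsum,
      hid0, hid1⟩ :=
    real_core K δ hK hδ0 hδ1 (fun y => (p0 y).toReal) (fun y => (p1 y).toReal)
      (fun y => ENNReal.toReal_nonneg) (fun y => ENNReal.toReal_nonneg)
      hs0 hs1 ht0 ht1 hm0 hm1
  have ha : (0:ℝ) ≤ (1 - δ) * (K / (1 + K)) :=
    mul_nonneg (by linarith) (div_nonneg hKpos.le hK1.le)
  have hb : (0:ℝ) ≤ (1 - δ) * (1 / (1 + K)) :=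
    mul_nonneg (by linarith) (div_nonneg zero_le_one hK1.le)
  refine ⟨fun z => match z with
    | .zero => mkPMF t0 h0n h0s h0sum
    | .top => mkPMF f hfn hfs hfsum
    | .bot => mkPMF g hgn hgs hgsum
    | .one => mkPMF t1 h1n h1s h1sum, ?_, ?_⟩
  · apply PMF.ext
    intro y
    rw [PMF.bind_apply, tsum_RROut]
    show r0 .zero * ENNReal.ofReal (t0 y) + r0 .top * ENNReal.ofReal (f y)
      + r0 .bot * ENNReal.ofReal (g y) + r0 .one * ENNReal.ofReal (t1 y) = p0 y
    rw [hr0z, hr0t, hr0b, hr0o, zero_mul, add_zero,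
      ← ENNReal.ofReal_mul hδ0, ← ENNReal.ofReal_mul ha, ← ENNReal.ofReal_mul hb,
      ← ENNReal.ofReal_add (mul_nonneg hδ0 (h0n y)) (mul_nonneg ha (hfn y)),
      ← ENNReal.ofReal_add (add_nonneg (mul_nonneg hδ0 (h0n y)) (mul_nonneg ha (hfn y)))
        (mul_nonneg hb (hgn y))]
    have := hid0 y
    rw [this]
    exact ENNReal.ofReal_toReal (PMF.apply_ne_top p0 y)
  · apply PMF.ext
    intro y
    rw [PMF.bind_apply, tsum_RROut]
    show r1 .zero * ENNReal.ofReal (t0 y) + r1 .top * ENNReal.ofReal (f y)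
      + r1 .bot * ENNReal.ofReal (g y) + r1 .one * ENNReal.ofReal (t1 y) = p1 y
    rw [hr1z, hr1t, hr1b, hr1o, zero_mul, zero_add,
      ← ENNReal.ofReal_mul hb, ← ENNReal.ofReal_mul ha, ← ENNReal.ofReal_mul hδ0,
      ← ENNReal.ofReal_add (mul_nonneg hb (hfn y)) (mul_nonneg ha (hgn y)),
      ← ENNReal.ofReal_add (add_nonneg (mul_nonneg hb (hfn y)) (mul_nonneg ha (hgn y)))
        (mul_nonneg hδ0 (h1n y))]
    have h := hid1 y
    have : (1 - δ) * (1 / (1 + K)) * f y + (1 - δ) * (K / (1 + K)) * g y + δ * t1 y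
        = (p1 y).toReal := by linarith
    rw [this]
    exact ENNReal.ofReal_toReal (PMF.apply_ne_top p1 y)
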